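/- For every $a\in\mathbb R$, $U_N(a)=\widetilde F_N^{-1}(V_N(a))$, where $\widetilde F_N$ is the step function on $[0,1]$ with $\widetilde F_N(\overline x_k)=F_N(\overline x_k)$ for all $k=0,\dots,K$ and constant on each $[\overline x_{k-1},\overline x_k)$, $\widetilde F_N^{-1}(t)=\inf\{x\in[0,1]:\widetilde F_N(x)\ge t\}$, and $V_N(a)=\mathrm{argmax}_{u\in\{\widetilde F_N(\overline x_0),\dots,\widetilde F_N(\overline x_K)\}}\{\Lambda_N\circ\widetilde F_N^{-1}(u)-au\}$ (greatest maximizer). -/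

import Mathlib

open MeasureTheory ProbabilityTheory Filter Set ENNReal NNReal

noncomputable section

/-- The greatest location of the maximum of `f` over `s ⊆ ℝ` (`sSup` of the set of maximizers). -/
def argmaxOn (s : Set ℝ) (f : ℝ → ℝ) : ℝ :=
  sSup {u | u ∈ s ∧ ∀ v ∈ s, f v ≤ f u}

/-- The grid `{k/K : k = 0,…,K}`. -/
def grid (K : ℕ) : Set ℝ := {u : ℝ | ∃ k : ℕ, k ≤ K ∧ u = (k : ℝ) / (K : ℝ)}

/-- Empirical distribution function `F_N` of `X_1,…,X_N`. -/
def empCDF (N : ℕ) (X : ℕ → ℝ) (x : ℝ) : ℝ :=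
  (N : ℝ)⁻¹ * ∑ i ∈ Finset.range N, (if X i ≤ x then (1 : ℝ) else 0)

/-- The process `Λ_N(x) = N⁻¹ ∑ Y_i 1{X_i ≤ x}`. -/
def empLam (N : ℕ) (X Y : ℕ → ℝ) (x : ℝ) : ℝ :=
  (N : ℝ)⁻¹ * ∑ i ∈ Finset.range N, (if X i ≤ x then Y i else 0)

/-- The inverse isotonic estimator `U_N(a)`: greatest maximizer of `Λ_N - a F_N` over the grid. -/
def UN (N K : ℕ) (X Y : ℕ → ℝ) (a : ℝ) : ℝ :=
  argmaxOn (grid K) (fun u => empLam N X Y u - a * empCDF N X u)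

/-- Generalized inverse of a nonincreasing function `f` on `[0,1]`: the greatest `t ∈ [0,1]`
with `f t ≥ a` (with `sSup ∅ = 0`, so the conventions `g a = 0` for `a > f 0` and
`g a = 1` for `a < f 1` hold automatically for nonincreasing `f`). -/
def genInv (f : ℝ → ℝ) (a : ℝ) : ℝ :=
  sSup {t | t ∈ Icc (0:ℝ) 1 ∧ a ≤ f t}

/-- The mixture distribution function `F_X = ∑_j (n_j/N) F_{Xj}`, i.e. the average of the
distribution functions of the individual covariates. -/
def FXbar {Ω : Type} [MeasurableSpace Ω] (P : Measure Ω) (N : ℕ) (X : ℕ → Ω → ℝ) (x : ℝ) : ℝ :=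
  (N : ℝ)⁻¹ * ∑ i ∈ Finset.range N, (P {ω | X i ω ≤ x}).toReal

/-- Number of observations (among the first `N`) belonging to sample `j`. -/
def nsz (N : ℕ) (sampleOf : ℕ → ℕ) (j : ℕ) : ℕ :=
  ((Finset.range N).filter fun i => sampleOf i = j).card

/-- `N·w_k`: number of covariates in bin `I_k = ((k-1)/K, k/K]`. -/
def binCnt (N K : ℕ) (X : ℕ → ℝ) (k : ℕ) : ℝ :=
  ∑ i ∈ Finset.range N, (if ((k : ℝ) - 1) / K < X i ∧ X i ≤ (k : ℝ) / K then (1:ℝ) else 0)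

def binSum (N K : ℕ) (X Y : ℕ → ℝ) (k : ℕ) : ℝ :=
  ∑ i ∈ Finset.range N, (if ((k : ℝ) - 1) / K < X i ∧ X i ≤ (k : ℝ) / K then Y i else 0)

/-- The weighted least squares criterion `∑_k w_k (ȳ_k - h_k)²`. -/
def isoObj (N K : ℕ) (X Y : ℕ → ℝ) (h : ℕ → ℝ) : ℝ :=
  ∑ k ∈ Finset.Icc 1 K, (binCnt N K X k / N) * (binSum N K X Y k / binCnt N K X k - h k) ^ 2

/-- `yhat` is a nonincreasing minimizer of the weighted least squares criterion over
nonincreasing vectors (the characterization of the isotonized regressogram `ŷ`). -/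
def IsIsoMin (N K : ℕ) (X Y : ℕ → ℝ) (yhat : ℕ → ℝ) : Prop :=
  (∀ k l, 1 ≤ k → k ≤ l → l ≤ K → yhat l ≤ yhat k) ∧
  ∀ h : ℕ → ℝ, (∀ k l, 1 ≤ k → k ≤ l → l ≤ K → h l ≤ h k) →
    isoObj N K X Y yhat ≤ isoObj N K X Y h

/-- Index `k` with `t ∈ ((k-1)/K, k/K]` (and `k = 1` for `t ≤ 1/K`): the left-continuous
piecewise-constant estimator `μ̂_N` satisfies `μ̂_N(t) = ŷ_{binIdx K t}`. -/
def binIdx (K : ℕ) (t : ℝ) : ℕ := max 1 ⌈(K : ℝ) * t⌉₊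

/-- The step process `Λ_N` extended to `[0,1]`, constant on each `[x̄_{k-1}, x̄_k)`. -/
def LamStep (N K : ℕ) (X Y : ℕ → ℝ) (x : ℝ) : ℝ :=
  empLam N X Y ((⌊(K : ℝ) * x⌋ : ℝ) / K)

/-- The step function `F̃_N`, constant on each `[x̄_{k-1}, x̄_k)`, with `F̃_N(x̄_k) = F_N(x̄_k)`. -/
def tilF (N K : ℕ) (X : ℕ → ℝ) (x : ℝ) : ℝ :=
  empCDF N X ((⌊(K : ℝ) * x⌋ : ℝ) / K)

/-- `F̃_N⁻¹(t) = inf{x ∈ [0,1] : F̃_N(x) ≥ t}`. -/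
def tilFinv (N K : ℕ) (X : ℕ → ℝ) (t : ℝ) : ℝ :=
  sInf {x | x ∈ Icc (0:ℝ) 1 ∧ t ≤ tilF N K X x}

/-- `V_N(a)`: greatest maximizer of `u ↦ Λ_N(F̃_N⁻¹(u)) - a u` over `{F̃_N(x̄_0),…,F̃_N(x̄_K)}`. -/
def VN (N K : ℕ) (X Y : ℕ → ℝ) (a : ℝ) : ℝ :=
  argmaxOn {u | ∃ k : ℕ, k ≤ K ∧ u = tilF N K X ((k : ℝ) / K)}
    (fun u => LamStep N K X Y (tilFinv N K X u) - a * u)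

/-- The centered process `M_N(u) = N⁻¹ ∑ ε_i 1{X_i ≤ u}`, `ε_i = Y_i - μ(X_i)`. -/
def MNproc {Ω : Type} (N : ℕ) (μreg : ℝ → ℝ) (X Y : ℕ → Ω → ℝ) (u : ℝ) (ω : Ω) : ℝ :=
  (N : ℝ)⁻¹ * ∑ i ∈ Finset.range N, (Y i ω - μreg (X i ω)) * (if X i ω ≤ u then (1:ℝ) else 0)

/- ---------- Auxiliary lemmas ---------- -/

lemma empCDF_mono (N : ℕ) (X : ℕ → ℝ) : Monotone (empCDF N X) := by
  intro x y hxy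
  unfold empCDF
  apply mul_le_mul_of_nonneg_left _ (by positivity)
  apply Finset.sum_le_sum
  intro i _
  by_cases h1 : X i ≤ x
  · simp [h1, h1.trans hxy]
  · split_ifs <;> norm_num

lemma floor_grid (K : ℕ) (hK : 0 < K) (k : ℕ) :
    ((⌊(K : ℝ) * ((k : ℝ) / K)⌋ : ℝ) / K) = (k : ℝ) / K := by
  have hKne : (K : ℝ) ≠ 0 := Nat.cast_ne_zero.mpr hK.ne'
  have h : (K : ℝ) * ((k : ℝ) / K) = (k : ℝ) := by field_simp
  rw [h, Int.floor_natCast]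
  norm_num

lemma tilF_grid (N K : ℕ) (hK : 0 < K) (X : ℕ → ℝ) (k : ℕ) :
    tilF N K X ((k : ℝ) / K) = empCDF N X ((k : ℝ) / K) := by
  unfold tilF; rw [floor_grid K hK]

lemma LamStep_grid (N K : ℕ) (hK : 0 < K) (X Y : ℕ → ℝ) (k : ℕ) :
    LamStep N K X Y ((k : ℝ) / K) = empLam N X Y ((k : ℝ) / K) := by
  unfold LamStep; rw [floor_grid K hK]

lemma Fk_step (N K : ℕ) (hK : 0 < K) (X : ℕ → ℝ)
    (hbins : ∀ k : ℕ, 1 ≤ k → k ≤ K → ∃ i < N, ((k : ℝ) - 1) / K < X i ∧ X i ≤ (k : ℝ) / K)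
    (hN : 0 < N) (k : ℕ) (hk : k + 1 ≤ K) :
    empCDF N X ((k : ℝ) / K) < empCDF N X (((k + 1 : ℕ) : ℝ) / K) := by
  obtain ⟨i, hiN, h1, h2⟩ := hbins (k + 1) (by omega) hk
  have hcast : (((k + 1 : ℕ) : ℝ) - 1) = (k : ℝ) := by push_cast; ring
  rw [hcast] at h1
  unfold empCDF
  apply mul_lt_mul_of_pos_left _ (inv_pos.mpr (Nat.cast_pos.mpr hN))
  apply Finset.sum_lt_sum
  · intro j _
    by_cases hj : X j ≤ (k : ℝ) / K
    · have hle : (k : ℝ) / K ≤ ((k + 1 : ℕ) : ℝ) / K := by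
        gcongr
        exact_mod_cast Nat.le_succ k
      have h2' := hj.trans hle
      push_cast at h2'
      simp [hj, h2']
    · split_ifs <;> norm_num
  · refine ⟨i, Finset.mem_range.mpr hiN, ?_⟩
    have hni : ¬ X i ≤ (k : ℝ) / K := not_le.mpr h1
    push_cast at h2
    simp [hni, h2]

lemma Fk_strict (N K : ℕ) (hK : 0 < K) (X : ℕ → ℝ)
    (hbins : ∀ k : ℕ, 1 ≤ k → k ≤ K → ∃ i < N, ((k : ℝ) - 1) / K < X i ∧ X i ≤ (k : ℝ) / K)
    (hN : 0 < N) (j k : ℕ) (hjk : j < k) (hk : k ≤ K) :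
    empCDF N X ((j : ℝ) / K) < empCDF N X ((k : ℝ) / K) := by
  have h1 : empCDF N X ((j : ℝ) / K) ≤ empCDF N X (((k - 1 : ℕ) : ℝ) / K) := by
    apply empCDF_mono
    gcongr
    exact_mod_cast Nat.le_sub_one_of_lt hjk
  have h2 := Fk_step N K hK X hbins hN (k - 1) (by omega)
  have hkk : (k - 1 + 1 : ℕ) = k := by omega
  rw [hkk] at h2
  linarith

lemma tilFinv_Fk (N K : ℕ) (hK : 0 < K) (X : ℕ → ℝ)
    (hbins : ∀ k : ℕ, 1 ≤ k → k ≤ K → ∃ i < N, ((k : ℝ) - 1) / K < X i ∧ X i ≤ (k : ℝ) / K)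
    (hN : 0 < N) (k : ℕ) (hk : k ≤ K) :
    tilFinv N K X (empCDF N X ((k : ℝ) / K)) = (k : ℝ) / K := by
  unfold tilFinv
  have hKpos : (0 : ℝ) < K := Nat.cast_pos.mpr hK
  have hmem : (k : ℝ) / K ∈ {x | x ∈ Icc (0:ℝ) 1 ∧ empCDF N X ((k:ℝ)/K) ≤ tilF N K X x} := by
    refine ⟨⟨by positivity, ?_⟩, ?_⟩
    · rw [div_le_one hKpos]; exact_mod_cast hk
    · rw [tilF_grid N K hK]
  apply le_antisymm
  · exact csInf_le ⟨0, fun x hx => hx.1.1⟩ hmem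
  · apply le_csInf ⟨_, hmem⟩
    intro x hx
    obtain ⟨⟨hx0, hx1⟩, hFx⟩ := hx
    by_contra hlt
    push_neg at hlt
    rcases Nat.eq_zero_or_pos k with rfl | hk1
    · simp only [Nat.cast_zero, zero_div] at hlt; linarith
    · have hKx : (K : ℝ) * x < (k : ℝ) := by
        have := (lt_div_iff₀ hKpos).mp hlt
        linarith [this]
      have hfl : (⌊(K : ℝ) * x⌋ : ℝ) ≤ ((k - 1 : ℕ) : ℝ) := by
        have h1 : ⌊(K : ℝ) * x⌋ < (k : ℤ) := Int.floor_lt.mpr (by exact_mod_cast hKx)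
        have h2 : ⌊(K : ℝ) * x⌋ ≤ (k : ℤ) - 1 := by omega
        have : ((k - 1 : ℕ) : ℝ) = (k : ℝ) - 1 := by
          push_cast [Nat.cast_sub hk1]; ring
        rw [this]
        have := (Int.cast_le (R := ℝ)).mpr h2
        push_cast at this ⊢
        linarith
      have hmono : tilF N K X x ≤ empCDF N X (((k - 1 : ℕ) : ℝ) / K) := by
        unfold tilF
        apply empCDF_mono
        gcongr
      have hlt2 : empCDF N X (((k - 1 : ℕ) : ℝ) / K) < empCDF N X ((k : ℝ) / K) :=
        Fk_strict N K hK X hbins hN (k - 1) k (by omega) hk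
      linarith

lemma argmaxOn_image (s : Finset ℕ) (g : ℕ → ℝ) (hg : Monotone g) (f : ℝ → ℝ)
    (A : Finset ℕ) (hA : A.Nonempty)
    (hAdef : ∀ k, k ∈ A ↔ k ∈ s ∧ ∀ l ∈ s, f (g l) ≤ f (g k)) :
    argmaxOn (↑(s.image g)) f = g (A.max' hA) := by
  unfold argmaxOn
  have hset : {u | u ∈ (↑(s.image g) : Set ℝ) ∧ ∀ v ∈ (↑(s.image g) : Set ℝ), f v ≤ f u}
      = ↑(A.image g) := by
    ext u
    simp only [Finset.coe_image, Set.mem_image, Finset.mem_coe, Set.mem_setOf_eq]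
    constructor
    · rintro ⟨⟨k, hk, rfl⟩, hmax⟩
      exact ⟨k, (hAdef k).mpr ⟨hk, fun l hl => hmax (g l) ⟨l, hl, rfl⟩⟩, rfl⟩
    · rintro ⟨k, hk, rfl⟩
      obtain ⟨hks, hmax⟩ := (hAdef k).mp hk
      exact ⟨⟨k, hks, rfl⟩, by rintro v ⟨l, hl, rfl⟩; exact hmax l hl⟩
  rw [hset, (hA.image g).csSup_eq_max', Finset.max'_image hg]

/-- `U_N(a) = F̃_N⁻¹(V_N(a))` for every `a ∈ ℝ`.
(As in the paper, every bin is assumed to contain at least one observation, so that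
`F̃_N⁻¹ ∘ F̃_N` is the identity on the grid; the paper works on the almost-sure event where
the covariates are distinct and invokes this identity, which requires the jumps of `F̃_N`.) -/
theorem statement12
    (N K : ℕ) (hK : 0 < K) (X Y : ℕ → ℝ)
    (hbins : ∀ k : ℕ, 1 ≤ k → k ≤ K → ∃ i < N, ((k : ℝ) - 1) / K < X i ∧ X i ≤ (k : ℝ) / K) :
    ∀ a : ℝ, UN N K X Y a = tilFinv N K X (VN N K X Y a) := by
  intro a
  classical
  have hN : 0 < N := by
    obtain ⟨i, hi, -⟩ := hbins 1 le_rfl hK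
    omega
  set g : ℕ → ℝ := fun k => (k : ℝ) / K with hg
  set F : ℕ → ℝ := fun k => empCDF N X ((k : ℝ) / K) with hFd
  set f : ℝ → ℝ := fun u => empLam N X Y u - a * empCDF N X u with hfd
  set f2 : ℝ → ℝ := fun u => LamStep N K X Y (tilFinv N K X u) - a * u with hf2d
  have hgmono : Monotone g := by
    intro j k h
    simp only [hg]
    gcongr <;> exact_mod_cast h
  have hFmono : Monotone F := fun j k h => empCDF_mono N X (hgmono h)
  have hobj : ∀ k ≤ K, f2 (F k) = f (g k) := by
    intro k hk
    simp only [hf2d, hfd, hFd, hg]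
    rw [tilFinv_Fk N K hK X hbins hN k hk, LamStep_grid N K hK X Y k]
  set A : Finset ℕ := @Finset.filter ℕ
      (fun k => ∀ l ∈ Finset.range (K + 1), f (g l) ≤ f (g k))
      (fun _ => Classical.propDecidable _) (Finset.range (K + 1)) with hAd
  have hAmem : ∀ k, k ∈ A ↔ k ∈ Finset.range (K + 1) ∧
      ∀ l ∈ Finset.range (K + 1), f (g l) ≤ f (g k) := by
    intro k; rw [hAd, Finset.filter_congr_decidable, Finset.mem_filter]
  have hAne : A.Nonempty := by
    obtain ⟨k, hk, hkmax⟩ :=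
      Finset.exists_max_image (Finset.range (K + 1)) (fun k => f (g k)) ⟨0, by simp⟩
    exact ⟨k, (hAmem k).mpr ⟨hk, hkmax⟩⟩
  set m : ℕ := A.max' hAne with hmd
  have hmK : m ≤ K := by
    have := (hAmem m).mp (A.max'_mem hAne)
    have := this.1
    simp only [Finset.mem_range] at this
    omega
  have hgrid : grid K = ↑((Finset.range (K + 1)).image g) := by
    ext u
    simp only [grid, Set.mem_setOf_eq, Finset.coe_image, Set.mem_image, Finset.mem_coe,
      Finset.mem_range, Nat.lt_succ_iff]
    constructor
    · rintro ⟨k, hk, rfl⟩; exact ⟨k, hk, rfl⟩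
    · rintro ⟨k, hk, rfl⟩; exact ⟨k, hk, rfl⟩
  have hUN : UN N K X Y a = g m := by
    have := argmaxOn_image (Finset.range (K + 1)) g hgmono f A hAne hAmem
    unfold UN
    rw [hgrid]
    exact this
  have hVset : {u | ∃ k : ℕ, k ≤ K ∧ u = tilF N K X ((k : ℝ) / K)}
      = ↑((Finset.range (K + 1)).image F) := by
    ext u
    simp only [Set.mem_setOf_eq, Finset.coe_image, Set.mem_image, Finset.mem_coe,
      Finset.mem_range, Nat.lt_succ_iff]
    constructor
    · rintro ⟨k, hk, rfl⟩
      exact ⟨k, hk, by rw [tilF_grid N K hK]⟩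
    · rintro ⟨k, hk, rfl⟩
      exact ⟨k, hk, by rw [tilF_grid N K hK]⟩
  have hAmem2 : ∀ k, k ∈ A ↔ k ∈ Finset.range (K + 1) ∧
      ∀ l ∈ Finset.range (K + 1), f2 (F l) ≤ f2 (F k) := by
    intro k
    rw [hAmem k]
    constructor
    · rintro ⟨hk, hmax⟩
      refine ⟨hk, fun l hl => ?_⟩
      rw [hobj l (by simpa [Nat.lt_succ_iff] using hl),
        hobj k (by simpa [Nat.lt_succ_iff] using hk)]
      exact hmax l hl
    · rintro ⟨hk, hmax⟩
      refine ⟨hk, fun l hl => ?_⟩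
      rw [← hobj l (by simpa [Nat.lt_succ_iff] using hl),
        ← hobj k (by simpa [Nat.lt_succ_iff] using hk)]
      exact hmax l hl
  have hVN : VN N K X Y a = F m := by
    have := argmaxOn_image (Finset.range (K + 1)) F hFmono f2 A hAne hAmem2
    unfold VN
    rw [hVset]
    exact this
  rw [hUN, hVN]
  simp only [hFd, hg]
  exact (tilFinv_Fk N K hK X hbins hN m hmK).symm
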